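/- Σ over integers m,n ≥ 1 with m odd of 1/(m²·n²·(m+n)²·(m+2n)²) = π⁸/322560. -/

import Mathlib

open Real Finset


lemma bern5 : bernoulli' 5 = 0 := by
  rw [bernoulli'_def]
  norm_num [Finset.sum_range_succ, Nat.choose]

lemma bern6 : bernoulli' 6 = 1/42 := by
  rw [bernoulli'_def]
  norm_num [Finset.sum_range_succ, bern5, Nat.choose]

lemma bern7 : bernoulli' 7 = 0 := by
  rw [bernoulli'_def]
  norm_num [Finset.sum_range_succ, bern5, bern6, Nat.choose]

lemma bern8 : bernoulli' 8 = -1/30 := by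
  rw [bernoulli'_def]
  norm_num [Finset.sum_range_succ, bern5, bern6, bern7, Nat.choose]

lemma zeta6 : HasSum (fun n : ℕ => (1 : ℝ) / (n : ℝ) ^ 6) (π ^ 6 / 945) := by
  have h := hasSum_zeta_nat (k := 3) (by norm_num)
  rw [bernoulli_eq_bernoulli'_of_ne_one (by norm_num), bern6] at h
  norm_num [Nat.factorial] at h
  convert h using 1
  · funext n; rw [one_div]
  · ring

lemma zeta8 : HasSum (fun n : ℕ => (1 : ℝ) / (n : ℝ) ^ 8) (π ^ 8 / 9450) := by
  have h := hasSum_zeta_nat (k := 4) (by norm_num)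
  rw [bernoulli_eq_bernoulli'_of_ne_one (by norm_num), bern8] at h
  norm_num [Nat.factorial] at h
  convert h using 1
  · funext n; rw [one_div]
  · ring

lemma hasSum_succ_inv_pow {p : ℕ} {a : ℝ} (hp : p ≠ 0)
    (h : HasSum (fun n : ℕ => (1:ℝ)/(n:ℝ)^p) a) :
    HasSum (fun n : ℕ => (1:ℝ)/((n:ℝ)+1)^p) a := by
  have h2 := (hasSum_nat_add_iff' (f := fun n : ℕ => (1:ℝ)/(n:ℝ)^p) 1).2 h
  simp only [Finset.sum_range_one, Nat.cast_zero, zero_pow hp, div_zero, sub_zero] at h2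
  convert h2 using 2 with n
  · rfl
  push_cast
  ring

lemma hasSum_odd_inv_pow {p : ℕ} {a : ℝ}
    (h : HasSum (fun n : ℕ => (1:ℝ)/(n:ℝ)^p) a) :
    HasSum (fun n : ℕ => (1:ℝ)/(2*(n:ℝ)+1)^p) (a - a/2^p) := by
  set f : ℕ → ℝ := fun n => (1:ℝ)/(n:ℝ)^p with hf
  have he : HasSum (fun k : ℕ => f (2*k)) (a/2^p) := by
    have h2 := h.mul_left ((1:ℝ)/2^p)
    convert h2 using 1
    · rfl
    · funext k
      simp only [hf]
      push_cast
      rw [mul_pow, ← one_div_mul_one_div]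
    · rw [div_eq_mul_inv, one_div, mul_comm]
  have hos : Summable (fun k : ℕ => f (2*k+1)) := by
    have hinj : Function.Injective (fun k : ℕ => 2*k+1) := fun x y hxy => by simp only [] at hxy; omega
    exact h.summable.comp_injective hinj
  have key := tsum_even_add_odd (f := f) he.summable hos
  rw [he.tsum_eq, h.tsum_eq] at key
  have h3 : HasSum (fun k : ℕ => f (2*k+1)) (a - a/2^p) := by
    have h4 := hos.hasSum
    rwa [show (∑' k, f (2*k+1)) = a - a/2^p by linarith] at h4
  convert h3 using 2 with k
  simp only [hf]
  push_cast
  ring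

lemma odd2 : HasSum (fun n : ℕ => (1:ℝ)/(2*(n:ℝ)+1)^2) (π^2/8) := by
  have h := hasSum_odd_inv_pow hasSum_zeta_two
  convert h using 1
  norm_num
  ring

lemma z2s : HasSum (fun n : ℕ => (1:ℝ)/((n:ℝ)+1)^2) (π^2/6) :=
  hasSum_succ_inv_pow two_ne_zero hasSum_zeta_two

lemma z6s : True := trivial


lemma odd6 : HasSum (fun n : ℕ => (1:ℝ)/(2*(n:ℝ)+1)^6) (π^6/960) := by
  have h := hasSum_odd_inv_pow zeta6
  convert h using 1
  norm_num
  ring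

lemma odd8 : HasSum (fun n : ℕ => (1:ℝ)/(2*(n:ℝ)+1)^8) (17*π^8/161280) := by
  have h := hasSum_odd_inv_pow zeta8
  convert h using 1
  norm_num
  ring

lemma tele1 (c : ℕ) :
    HasSum (fun t : ℕ => 1/((t:ℝ)+(c:ℝ)+1) - 1/((t:ℝ)+(c:ℝ)+2)) (1/((c:ℝ)+1)) := by
  have hnn : ∀ t : ℕ, 0 ≤ 1/((t:ℝ)+(c:ℝ)+1) - 1/((t:ℝ)+(c:ℝ)+2) := by
    intro t
    have h1 : (0:ℝ) < (t:ℝ)+(c:ℝ)+1 := by positivity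
    have h2 : (0:ℝ) < (t:ℝ)+(c:ℝ)+2 := by positivity
    rw [sub_nonneg]
    apply one_div_le_one_div_of_le h1
    linarith
  rw [hasSum_iff_tendsto_nat_of_nonneg hnn]
  have hps : ∀ n : ℕ, ∑ t ∈ range n, (1/((t:ℝ)+(c:ℝ)+1) - 1/((t:ℝ)+(c:ℝ)+2))
      = 1/((c:ℝ)+1) - 1/((n:ℝ)+(c:ℝ)+1) := by
    intro n
    have := Finset.sum_range_sub' (fun t : ℕ => 1/((t:ℝ)+(c:ℝ)+1)) n
    simp only [Nat.cast_zero, zero_add] at this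
    rw [← this]
    apply Finset.sum_congr rfl
    intro i _
    push_cast
    ring_nf
  simp only [hps]
  have : Filter.Tendsto (fun n : ℕ => 1/((n:ℝ)+(c:ℝ)+1)) Filter.atTop (nhds 0) := by
    apply Filter.Tendsto.comp tendsto_inv_atTop_zero ?_ |>.congr (fun n => by rw [Function.comp_apply, one_div])
    apply Filter.tendsto_atTop_add_const_right
    apply Filter.tendsto_atTop_add_const_right
    exact tendsto_natCast_atTop_atTop
  have := Filter.Tendsto.const_sub (1/((c:ℝ)+1)) this
  simpa using this

lemma telescope (c : ℕ) :
    HasSum (fun t : ℕ => 1/((t:ℝ)+1) - 1/((t:ℝ)+(c:ℝ)+1))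
      (∑ s ∈ range c, 1/((s:ℝ)+1)) := by
  have h : ∀ t : ℕ, 1/((t:ℝ)+1) - 1/((t:ℝ)+(c:ℝ)+1)
      = ∑ s ∈ range c, (1/((t:ℝ)+(s:ℝ)+1) - 1/((t:ℝ)+(s:ℝ)+2)) := by
    intro t
    have := Finset.sum_range_sub' (fun s : ℕ => 1/((t:ℝ)+(s:ℝ)+1)) c
    simp only [Nat.cast_zero, add_zero] at this
    rw [← this]
    apply Finset.sum_congr rfl
    intro i _
    push_cast
    ring_nf
  have h2 : HasSum (fun t : ℕ => ∑ s ∈ range c, (1/((t:ℝ)+(s:ℝ)+1) - 1/((t:ℝ)+(s:ℝ)+2)))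
      (∑ s ∈ range c, 1/((s:ℝ)+1)) := hasSum_sum (fun s _ => tele1 s)
  convert h2 using 1
  funext t
  exact h t


lemma cast_reflect {j i : ℕ} (h : i < j) : ((j - 1 - i : ℕ) : ℝ) = (j:ℝ) - 1 - (i:ℝ) := by
  have h2 : j - 1 - i = j - (1+i) := by omega
  rw [h2, Nat.cast_sub (by omega)]
  push_cast; ring

section Fixed
variable (j : ℕ)

lemma hs1 : HasSum (fun i : ℕ => if i = j then 0 else 1/((i:ℝ)-(j:ℝ)) - 1/((i:ℝ)+(j:ℝ)+1))
    (1/(2*(j:ℝ)+1)) := by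
  set s1 : ℕ → ℝ := fun i => if i = j then 0 else 1/((i:ℝ)-(j:ℝ)) - 1/((i:ℝ)+(j:ℝ)+1) with hs1d
  have htail : HasSum (fun t : ℕ => s1 (t + (j+1))) (∑ s ∈ range (2*j+1), 1/((s:ℝ)+1)) := by
    have h := telescope (2*j+1)
    convert h using 2 with t
    have hne : t + (j+1) ≠ j := by omega
    simp only [hs1d, if_neg hne]
    push_cast
    ring_nf
  have h5 := (hasSum_nat_add_iff (j+1)).1 htail
  have hhead : ∑ i ∈ range (j+1), s1 i
      = -(∑ i ∈ range j, 1/((i:ℝ)+1)) - ∑ i ∈ range j, 1/((i:ℝ)+(j:ℝ)+1) := by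
    rw [Finset.sum_range_succ]
    simp only [hs1d, if_pos rfl, add_zero]
    have e1 : ∑ i ∈ range j, (if i = j then (0:ℝ) else 1/((i:ℝ)-(j:ℝ)) - 1/((i:ℝ)+(j:ℝ)+1))
        = ∑ i ∈ range j, (1/((i:ℝ)-(j:ℝ)) - 1/((i:ℝ)+(j:ℝ)+1)) := by
      apply Finset.sum_congr rfl
      intro i hi
      rw [if_neg (by have := Finset.mem_range.1 hi; omega)]
    rw [e1, Finset.sum_sub_distrib]
    congr 1
    rw [← Finset.sum_range_reflect (fun i : ℕ => 1/((i:ℝ)-(j:ℝ))) j]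
    rw [← Finset.sum_neg_distrib]
    apply Finset.sum_congr rfl
    intro i hi
    rw [cast_reflect (Finset.mem_range.1 hi)]
    have h1 : (j:ℝ) - 1 - (i:ℝ) - (j:ℝ) = -((i:ℝ)+1) := by ring
    rw [h1, one_div, one_div, inv_neg]
  have hC : ∑ s ∈ range (2*j+1), 1/((s:ℝ)+1)
      = (∑ i ∈ range j, 1/((i:ℝ)+1))
        + ((∑ i ∈ range j, 1/((i:ℝ)+(j:ℝ)+1)) + 1/(2*(j:ℝ)+1)) := by
    rw [show 2*j+1 = j + (j+1) by ring, Finset.sum_range_add, Finset.sum_range_succ]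
    congr 1
    congr 1
    · apply Finset.sum_congr rfl
      intro x _
      push_cast
      ring_nf
    · push_cast
      ring_nf
  convert h5 using 1
  · rfl
  rw [hhead, hC]
  ring

lemma hs2 : HasSum (fun i : ℕ => if i = j then 0 else 1/((i:ℝ)-(j:ℝ))^2)
    (π^2/6 + ∑ s ∈ range j, 1/((s:ℝ)+1)^2) := by
  set s2 : ℕ → ℝ := fun i => if i = j then 0 else 1/((i:ℝ)-(j:ℝ))^2 with hs2d
  have htail : HasSum (fun t : ℕ => s2 (t + (j+1))) (π^2/6) := by
    have h := z2s
    convert h using 2 with t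
    have hne : t + (j+1) ≠ j := by omega
    simp only [hs2d, if_neg hne]
    push_cast
    ring_nf
  have h5 := (hasSum_nat_add_iff (j+1)).1 htail
  have hhead : ∑ i ∈ range (j+1), s2 i = ∑ s ∈ range j, 1/((s:ℝ)+1)^2 := by
    rw [Finset.sum_range_succ]
    simp only [hs2d, if_pos rfl, add_zero]
    rw [show (∑ i ∈ range j, if i = j then (0:ℝ) else 1/((i:ℝ)-(j:ℝ))^2)
        = ∑ i ∈ range j, 1/((i:ℝ)-(j:ℝ))^2 from Finset.sum_congr rfl (fun i hi =>
          if_neg (by have := Finset.mem_range.1 hi; omega))]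
    rw [← Finset.sum_range_reflect (fun i : ℕ => 1/((i:ℝ)-(j:ℝ))^2) j]
    apply Finset.sum_congr rfl
    intro i hi
    rw [cast_reflect (Finset.mem_range.1 hi)]
    have h1 : ((j:ℝ) - 1 - (i:ℝ) - (j:ℝ))^2 = ((i:ℝ)+1)^2 := by ring
    rw [h1]
  rw [hhead] at h5
  exact h5

lemma hs3 : HasSum (fun i : ℕ => if i = j then 0 else 1/((i:ℝ)+(j:ℝ)+1)^2)
    (π^2/6 - (∑ s ∈ range j, 1/((s:ℝ)+1)^2) - 1/(2*(j:ℝ)+1)^2) := by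
  have hg3 : HasSum (fun i : ℕ => 1/((i:ℝ)+(j:ℝ)+1)^2)
      (π^2/6 - ∑ s ∈ range j, 1/((s:ℝ)+1)^2) := by
    have h := (hasSum_nat_add_iff' (f := fun n : ℕ => (1:ℝ)/((n:ℝ)+1)^2) j).2 z2s
    convert h using 2 with t
    · rfl
    push_cast
    ring_nf
  have hsub := hg3.sub (hasSum_ite_eq j (1/((j:ℝ)+(j:ℝ)+1)^2))
  convert hsub using 1
  · rfl
  · funext i
    by_cases hi : i = j
    · subst hi; simp
    · simp [hi]
  · rw [show (j:ℝ)+(j:ℝ)+1 = 2*(j:ℝ)+1 by ring]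

lemma hs4 : HasSum (fun i : ℕ => if i = j then 0 else 1/(2*(i:ℝ)+1)^2)
    (π^2/8 - 1/(2*(j:ℝ)+1)^2) := by
  have hsub := odd2.sub (hasSum_ite_eq j (1/(2*(j:ℝ)+1)^2))
  convert hsub using 1
  · rfl
  · funext i
    by_cases hi : i = j
    · subst hi; simp
    · simp [hi]

lemma inner_hasSum :
    HasSum (fun i : ℕ => if i = j then 0 else
      1/((2*(i:ℝ)+1)^2 * (2*(j:ℝ)+1)^2 * ((i:ℝ)-(j:ℝ))^2 * ((i:ℝ)+(j:ℝ)+1)^2))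
    (7*π^2/3 * (1/(2*(j:ℝ)+1)^6) - 23 * (1/(2*(j:ℝ)+1)^8)) := by
  set b : ℝ := 2*(j:ℝ)+1 with hb
  have hbpos : (0:ℝ) < b := by positivity
  have hbne : b ≠ 0 := ne_of_gt hbpos
  have hcomb := (((hs1 j).mul_left (-6/b^7)).add (((hs2 j).mul_left (1/b^6)).add
    (((hs3 j).mul_left (1/b^6)).add ((hs4 j).mul_left (16/b^6)))))
  convert hcomb using 1
  · rfl
  · funext i
    by_cases hi : i = j
    · simp [hi]
    · simp only [if_neg hi]
      have hne : (i:ℝ) ≠ (j:ℝ) := by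
        exact_mod_cast fun h => hi (Nat.cast_injective h)
      have h1 : (i:ℝ) - (j:ℝ) ≠ 0 := sub_ne_zero.mpr hne
      have h2 : 2*(i:ℝ)+1 ≠ 0 := by positivity
      have h3 : (i:ℝ)+(j:ℝ)+1 ≠ 0 := by positivity
      field_simp
      ring
  · field_simp
    ring

end Fixed


lemma outer_hasSum :
    HasSum (fun j : ℕ => 7*π^2/3 * (1/(2*(j:ℝ)+1)^6) - 23 * (1/(2*(j:ℝ)+1)^8)) (π^8/161280) := by
  have h := (odd6.mul_left (7*π^2/3)).sub (odd8.mul_left 23)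
  convert h using 1
  · rfl
  ring

noncomputable def kk (p : ℕ × ℕ) : ℝ := if p.2 = p.1 then 0 else
  1/((2*(p.2:ℝ)+1)^2 * (2*(p.1:ℝ)+1)^2 * ((p.2:ℝ)-(p.1:ℝ))^2 * ((p.2:ℝ)+(p.1:ℝ)+1)^2)



lemma kk_nonneg (p : ℕ × ℕ) : 0 ≤ kk p := by
  rw [kk]
  split_ifs
  · exact le_refl 0
  · positivity

lemma kk_le (p : ℕ × ℕ) : kk p ≤ ((1:ℝ)/(2*(p.1:ℝ)+1)^2) * ((1:ℝ)/(2*(p.2:ℝ)+1)^2) := by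
  rw [kk]
  split_ifs with h
  · positivity
  · rw [one_div_mul_one_div]
    have hAB : (0:ℝ) < (2*(p.1:ℝ)+1)^2 * (2*(p.2:ℝ)+1)^2 := by positivity
    apply one_div_le_one_div_of_le hAB
    have hC : (1:ℝ) ≤ ((p.2:ℝ)-(p.1:ℝ))^2 := by
      have h0 : (p.2:ℤ) - (p.1:ℤ) ≠ 0 := by omega
      have h1 : (1:ℤ) ≤ ((p.2:ℤ) - (p.1:ℤ))^2 := by
        rcases h0.lt_or_gt with h'|h' <;> nlinarith
      have h2 : ((1:ℤ):ℝ) ≤ ((((p.2:ℤ) - (p.1:ℤ))^2 : ℤ) : ℝ) := by exact_mod_cast h1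
      push_cast at h2
      exact_mod_cast h2
    have hD : (1:ℝ) ≤ ((p.2:ℝ)+(p.1:ℝ)+1)^2 := by
      have h1 : (0:ℝ) ≤ (p.2:ℝ) := Nat.cast_nonneg _
      have h2 : (0:ℝ) ≤ (p.1:ℝ) := Nat.cast_nonneg _
      nlinarith
    nlinarith [hAB, hC, hD, mul_pos hAB (by positivity : (0:ℝ) < ((p.2:ℝ)-(p.1:ℝ))^2)]

set_option maxHeartbeats 1000000 in
lemma kk_summable : Summable kk := by
  have hg : Summable (fun n : ℕ => (1:ℝ)/(2*(n:ℝ)+1)^2) := odd2.summable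
  have hnn : 0 ≤ (fun n : ℕ => (1:ℝ)/(2*(n:ℝ)+1)^2) := by
    intro n
    positivity
  have hprod : Summable (fun p : ℕ×ℕ => ((1:ℝ)/(2*(p.1:ℝ)+1)^2) * ((1:ℝ)/(2*(p.2:ℝ)+1)^2)) :=
    hg.mul_of_nonneg hg hnn hnn
  exact Summable.of_nonneg_of_le kk_nonneg kk_le hprod
lemma W_eq : ∑' p : ℕ×ℕ, kk p = π^8/161280 := by
  have hrow : ∀ b : ℕ, Summable (fun i : ℕ => kk (b, i)) := fun b => (inner_hasSum b).summable
  calc ∑' p : ℕ×ℕ, kk p = ∑' (b : ℕ) (c : ℕ), kk (b, c) := Summable.tsum_prod' kk_summable hrow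
    _ = ∑' b : ℕ, (7*π^2/3 * (1/(2*(b:ℝ)+1)^6) - 23 * (1/(2*(b:ℝ)+1)^8)) :=
        tsum_congr (fun b => (inner_hasSum b).tsum_eq)
    _ = π^8/161280 := outer_hasSum.tsum_eq



noncomputable def f0 (pr : ℕ × ℕ) : ℝ := if (pr.1 + 1) % 2 = 1 then
      (1 : ℝ) / (((pr.1 : ℝ) + 1) ^ 2 * ((pr.2 : ℝ) + 1) ^ 2
        * ((pr.1 : ℝ) + (pr.2 : ℝ) + 2) ^ 2
        * ((pr.1 : ℝ) + 2 * (pr.2 : ℝ) + 3) ^ 2) else 0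

noncomputable def kk1 (p : ℕ × ℕ) : ℝ := if p.2 < p.1 then kk p else 0
noncomputable def kk2 (p : ℕ × ℕ) : ℝ := if p.1 < p.2 then kk p else 0


lemma kk_split (p : ℕ × ℕ) : kk p = kk1 p + kk2 p := by
  rw [kk1, kk2]
  rcases lt_trichotomy p.2 p.1 with h|h|h
  · rw [if_pos h, if_neg (by omega)]
    ring
  · rw [if_neg (by omega), if_neg (by omega), kk, if_pos h]
    ring
  · rw [if_neg (by omega), if_pos h]
    ring

lemma kk1_summable : Summable kk1 := by
  refine Summable.of_nonneg_of_le (fun p => ?_) (fun p => ?_) kk_summable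
  · rw [kk1]; split_ifs; exacts [kk_nonneg p, le_refl 0]
  · rw [kk1]; split_ifs; exacts [le_refl _, kk_nonneg p]

lemma kk2_summable : Summable kk2 := by
  refine Summable.of_nonneg_of_le (fun p => ?_) (fun p => ?_) kk_summable
  · rw [kk2]; split_ifs; exacts [kk_nonneg p, le_refl 0]
  · rw [kk2]; split_ifs; exacts [le_refl _, kk_nonneg p]

lemma hpoint1 (q : ℕ × ℕ) : kk1 (q.1+q.2+1, q.1) = f0 (2*q.1, q.2) := by
  rw [kk1, if_pos (by omega : (q.1+q.2+1, q.1).2 < (q.1+q.2+1, q.1).1),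
    kk, if_neg (by omega : ¬((q.1+q.2+1, q.1).2 = (q.1+q.2+1, q.1).1)),
    f0, if_pos (by omega : ((2*q.1, q.2).1 + 1) % 2 = 1)]
  congr 1
  push_cast
  ring

lemma hpoint2 (q : ℕ × ℕ) : kk2 (q.1, q.1+q.2+1) = f0 (2*q.1, q.2) := by
  rw [kk2, if_pos (by omega : (q.1, q.1+q.2+1).1 < (q.1, q.1+q.2+1).2),
    kk, if_neg (by omega : ¬((q.1, q.1+q.2+1).2 = (q.1, q.1+q.2+1).1)),
    f0, if_pos (by omega : ((2*q.1, q.2).1 + 1) % 2 = 1)]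
  congr 1
  push_cast
  ring

noncomputable def g0 (q : ℕ × ℕ) : ℝ := f0 (2*q.1, q.2)

lemma stepA : ∑' pr : ℕ × ℕ, f0 pr = ∑' q : ℕ × ℕ, g0 q := by
  apply tsum_eq_tsum_of_ne_zero_bij (fun x => (2*x.val.1, x.val.2))
  · intro x y hxy
    simp only [Prod.mk.injEq] at hxy
    exact Subtype.ext (Prod.ext (by omega) hxy.2)
  · intro p hp
    have hm : (p.1 + 1) % 2 = 1 := by
      by_contra hodd
      exact hp (if_neg hodd)
    have hpe : (2*(p.1/2), p.2) = p := Prod.ext (by omega) rfl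
    refine ⟨⟨(p.1/2, p.2), ?_⟩, ?_⟩
    · show f0 (2*(p.1/2), p.2) ≠ 0
      rw [hpe]
      exact hp
    · exact hpe
  · intro x
    rfl

lemma step1 : ∑' p : ℕ × ℕ, kk1 p = ∑' q : ℕ × ℕ, g0 q := by
  apply tsum_eq_tsum_of_ne_zero_bij (fun x => (x.val.1 + x.val.2 + 1, x.val.1))
  · intro x y hxy
    simp only [Prod.mk.injEq] at hxy
    exact Subtype.ext (Prod.ext hxy.2 (by omega))
  · intro p hp
    have hlt : p.2 < p.1 := by
      by_contra hge
      exact hp (if_neg hge)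
    have hpe : ((p.2 : ℕ) + (p.1 - p.2 - 1) + 1, p.2) = p := Prod.ext (by omega) rfl
    refine ⟨⟨(p.2, p.1 - p.2 - 1), ?_⟩, ?_⟩
    · show g0 (p.2, p.1 - p.2 - 1) ≠ 0
      intro h0
      rw [g0, ← hpoint1 (p.2, p.1 - p.2 - 1)] at h0
      apply Function.mem_support.mp hp
      rw [← hpe]
      exact h0
    · exact hpe
  · intro x
    exact hpoint1 x.val

lemma step2 : ∑' p : ℕ × ℕ, kk2 p = ∑' q : ℕ × ℕ, g0 q := by
  apply tsum_eq_tsum_of_ne_zero_bij (fun x => (x.val.1, x.val.1 + x.val.2 + 1))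
  · intro x y hxy
    simp only [Prod.mk.injEq] at hxy
    exact Subtype.ext (Prod.ext hxy.1 (by omega))
  · intro p hp
    have hlt : p.1 < p.2 := by
      by_contra hge
      exact hp (if_neg hge)
    have hpe : ((p.1 : ℕ), p.1 + (p.2 - p.1 - 1) + 1) = p := Prod.ext rfl (by omega)
    refine ⟨⟨(p.1, p.2 - p.1 - 1), ?_⟩, ?_⟩
    · show g0 (p.1, p.2 - p.1 - 1) ≠ 0
      intro h0
      rw [g0, ← hpoint2 (p.1, p.2 - p.1 - 1)] at h0
      apply Function.mem_support.mp hp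
      rw [← hpe]
      exact h0
    · exact hpe
  · intro x
    exact hpoint2 x.val

theorem final : ∑' pr : ℕ × ℕ, f0 pr = π^8/322560 := by
  have hsplit : ∑' p : ℕ×ℕ, kk p = (∑' p : ℕ×ℕ, kk1 p) + ∑' p : ℕ×ℕ, kk2 p := by
    rw [← Summable.tsum_add kk1_summable kk2_summable]
    exact tsum_congr kk_split
  rw [stepA]
  rw [step1, step2, W_eq] at hsplit
  linarith

/-- The value ζ₂PSp2(2,2,2,2): the sum over m,n ≥ 1 with m odd of
1/(m²n²(m+n)²(m+2n)²) equals π⁸/322560. -/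
theorem zeta2_PSp2_two_two_two_two :
    (∑' pr : ℕ × ℕ, (if (pr.1 + 1) % 2 = 1 then
      (1 : ℝ) / (((pr.1 : ℝ) + 1) ^ 2 * ((pr.2 : ℝ) + 1) ^ 2
        * ((pr.1 : ℝ) + (pr.2 : ℝ) + 2) ^ 2
        * ((pr.1 : ℝ) + 2 * (pr.2 : ℝ) + 3) ^ 2) else 0))
    = Real.pi ^ 8 / 322560 := by
  show (∑' pr : ℕ × ℕ, f0 pr) = π ^ 8 / 322560
  exact final
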